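/- For any vectors x, y ∈ ℝ^p, the Minkowski sum of the permutahedra Π(x) and Π(y) equals the permutahedron Π(x + y), where x and y are taken in their (weakly) decreasing arrangements; that is, ConvexHull{x_π : π ∈ S_p} + ConvexHull{y_π : π ∈ S_p} = ConvexHull{(x+y)_π : π ∈ S_p}, provided x and y are both weakly decreasing. -/

import Mathlib

open Pointwise

/-- The permutahedron of `v`: the convex hull of all coordinate permutations. -/
def permutahedron {p : ℕ} (v : Fin p → ℝ) : Set (Fin p → ℝ) :=
  convexHull ℝ {w | ∃ σ : Equiv.Perm (Fin p), w = v ∘ σ}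

namespace PermutahedronAux

/-- The permutahedron is invariant under coordinate permutations. -/
lemma comp_mem {p : ℕ} (v : Fin p → ℝ) (σ : Equiv.Perm (Fin p)) {w : Fin p → ℝ}
    (hw : w ∈ permutahedron v) : w ∘ σ ∈ permutahedron v := by
  classical
  set S : Set (Fin p → ℝ) := {w | ∃ τ : Equiv.Perm (Fin p), w = v ∘ τ} with hS
  set L : (Fin p → ℝ) →ₗ[ℝ] (Fin p → ℝ) := LinearMap.funLeft ℝ ℝ σ with hL
  have himg : L '' (convexHull ℝ S) = convexHull ℝ (L '' S) :=
    L.image_convexHull S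
  have hsub : L '' S ⊆ S := by
    rintro _ ⟨_, ⟨τ, rfl⟩, rfl⟩
    exact ⟨σ.trans τ, rfl⟩
  have : L w ∈ convexHull ℝ (L '' S) := himg ▸ Set.mem_image_of_mem L hw
  exact convexHull_mono hsub this

/-- Two antitone tuples that are permutations of each other are equal. -/
lemma antitone_perm_eq {p : ℕ} {y u : Fin p → ℝ} (hy : Antitone y) (hu : Antitone u)
    (τ : Equiv.Perm (Fin p)) (h : u = y ∘ τ) : u = y := by
  have hrev : ∀ (f : Fin p → ℝ), Antitone f → Monotone (f ∘ Fin.revPerm) := by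
    intro f hf a b hab
    exact hf (by simpa [Fin.rev_le_rev] using hab)
  have h1 : Monotone (y ∘ (Fin.revPerm.trans τ : Equiv.Perm (Fin p))) := by
    have : (y ∘ (Fin.revPerm.trans τ : Equiv.Perm (Fin p))) = u ∘ Fin.revPerm := by
      funext i; simp [h]
    rw [this]; exact hrev u hu
  have h2 : Monotone (y ∘ (Fin.revPerm : Equiv.Perm (Fin p))) := hrev y hy
  have := Tuple.unique_monotone (f := y) h1 h2
  funext i
  have h3 := congrFun this (Fin.rev i)
  simpa [h] using h3

/-- If `u` is not antitone, there is an adjacent increasing pair. -/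
lemma exists_adj {p : ℕ} {u : Fin p → ℝ} (h : ¬ Antitone u) :
    ∃ k j : Fin p, (k : ℕ) + 1 = (j : ℕ) ∧ u k < u j := by
  cases p with
  | zero => exact absurd (fun a _ _ => a.elim0) h
  | succ n =>
    rw [Fin.antitone_iff_succ_le] at h
    push_neg at h
    obtain ⟨i, hi⟩ := h
    exact ⟨i.castSucc, i.succ, by simp, hi⟩

/-- Inversions of a tuple. -/
noncomputable def invs {p : ℕ} (u : Fin p → ℝ) : Finset (Fin p × Fin p) := by
  classical exact Finset.univ.filter fun q => q.1 < q.2 ∧ u q.1 < u q.2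

lemma swap_adj_lt {p : ℕ} {k j a b : Fin p} (hkj : (k : ℕ) + 1 = (j : ℕ))
    (hab : a < b) (hne : ¬(a = k ∧ b = j)) : Equiv.swap k j a < Equiv.swap k j b := by
  have hab' : (a : ℕ) < (b : ℕ) := hab
  have hkjlt : (k : ℕ) < (j : ℕ) := by omega
  rw [Fin.lt_def]
  rcases eq_or_ne a k with hak | hak
  · subst hak
    -- b ≠ j (else excluded), b > a = k, so (b:ℕ) > k, b ≠ j ⇒ (b:ℕ) > j
    have hbj : b ≠ j := fun hb => hne ⟨rfl, hb⟩
    have hbk : b ≠ a := hab.ne'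
    have hbval : (j : ℕ) < (b : ℕ) := by
      rcases lt_or_ge (j : ℕ) (b : ℕ) with h | h
      · exact h
      · exfalso; apply hbj; apply Fin.ext; omega
    rw [Equiv.swap_apply_left, Equiv.swap_apply_of_ne_of_ne hbk hbj]
    omega
  · rcases eq_or_ne a j with haj | haj
    · subst haj
      have hbk : b ≠ k := by intro hb; rw [hb] at hab'; omega
      have hbj : b ≠ a := hab.ne'
      rw [Equiv.swap_apply_right, Equiv.swap_apply_of_ne_of_ne hbk hbj]
      omega
    · rw [Equiv.swap_apply_of_ne_of_ne hak haj]
      rcases eq_or_ne b k with hbk | hbk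
      · subst hbk
        rw [Equiv.swap_apply_left]
        have : (a : ℕ) ≠ (b : ℕ) + 1 := by
          intro h; apply haj; apply Fin.ext; omega
        omega
      · rcases eq_or_ne b j with hbj | hbj
        · subst hbj
          rw [Equiv.swap_apply_right]
          have : (a : ℕ) ≠ (k : ℕ) := fun h => hak (Fin.ext h)
          omega
        · rw [Equiv.swap_apply_of_ne_of_ne hbk hbj]
          omega

lemma invs_swap_card_lt {p : ℕ} (u : Fin p → ℝ) {k j : Fin p}
    (hkj : (k : ℕ) + 1 = (j : ℕ)) (huv : u k < u j) :
    (invs (u ∘ Equiv.swap k j)).card < (invs u).card := by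
  classical
  have hklt : k < j := by rw [Fin.lt_def]; omega
  have hmem : (k, j) ∈ invs u := by simp [invs, hklt, huv]
  have hcard : (invs (u ∘ Equiv.swap k j)).card ≤ ((invs u).erase (k, j)).card := by
    apply Finset.card_le_card_of_injOn (fun q => (Equiv.swap k j q.1, Equiv.swap k j q.2))
    · rintro ⟨a, b⟩ hq
      unfold invs at hq
      have hq := Finset.mem_filter.1 hq
      simp only [Finset.mem_univ, true_and, Function.comp_apply] at hq
      obtain ⟨hab, hu⟩ := hq
      have hne : ¬(a = k ∧ b = j) := by
        rintro ⟨rfl, rfl⟩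
        rw [Equiv.swap_apply_left, Equiv.swap_apply_right] at hu
        exact absurd huv (not_lt.2 hu.le)
      have hlt : Equiv.swap k j a < Equiv.swap k j b := swap_adj_lt hkj hab hne
      rw [Finset.mem_coe, Finset.mem_erase]
      constructor
      · rintro hcontra
        have h1 : Equiv.swap k j a = k := congrArg Prod.fst hcontra
        have h2 : Equiv.swap k j b = j := congrArg Prod.snd hcontra
        have ha : a = j := by
          have := congrArg (Equiv.swap k j) h1
          simpa [Equiv.swap_apply_self, Equiv.swap_apply_left] using this
        have hb : b = k := by
          have := congrArg (Equiv.swap k j) h2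
          simpa [Equiv.swap_apply_self, Equiv.swap_apply_right] using this
        rw [ha, hb] at hab
        exact absurd hklt (not_lt.2 hab.le)
      · simp [invs, hlt, hu]
    · rintro ⟨a, b⟩ _ ⟨c, d⟩ _ h
      have h1 : Equiv.swap k j a = Equiv.swap k j c := congrArg Prod.fst h
      have h2 : Equiv.swap k j b = Equiv.swap k j d := congrArg Prod.snd h
      exact Prod.ext ((Equiv.swap k j).injective h1) ((Equiv.swap k j).injective h2)
  calc (invs (u ∘ Equiv.swap k j)).card ≤ ((invs u).erase (k, j)).card := hcard
    _ < (invs u).card := Finset.card_erase_lt_of_mem hmem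

/-- Key lemma: for antitone `x`, `y`, any permutation `u` of `y` satisfies
`x + u ∈ permutahedron (x + y)`. -/
lemma key {p : ℕ} (x y : Fin p → ℝ) (hx : Antitone x) (hy : Antitone y) :
    ∀ (u : Fin p → ℝ), (∃ τ : Equiv.Perm (Fin p), u = y ∘ τ) →
      x + u ∈ permutahedron (x + y) := by
  classical
  suffices H : ∀ n (u : Fin p → ℝ), (invs u).card = n →
      (∃ τ : Equiv.Perm (Fin p), u = y ∘ τ) → x + u ∈ permutahedron (x + y) by
    intro u hu; exact H _ u rfl hu
  intro n
  induction n using Nat.strong_induction_on with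
  | _ n IH =>
    intro u hcard hu
    by_cases hant : Antitone u
    · obtain ⟨τ, hτ⟩ := hu
      have : u = y := antitone_perm_eq hy hant τ hτ
      rw [this]
      exact subset_convexHull ℝ _ ⟨Equiv.refl _, by simp⟩
    · obtain ⟨k, j, hkj, hukj⟩ := exists_adj hant
      set s := Equiv.swap k j with hs
      set u' := u ∘ s with hu'
      have hklt : k < j := by rw [Fin.lt_def]; omega
      have hkle : k ≤ j := hklt.le
      -- inversion count decreases
      have hdec : (invs u').card < n := hcard ▸ invs_swap_card_lt u hkj hukj
      have hu'perm : ∃ τ : Equiv.Perm (Fin p), u' = y ∘ τ := by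
        obtain ⟨τ, hτ⟩ := hu
        exact ⟨s.trans τ, by funext i; simp [hu', hτ]⟩
      have hA : x + u' ∈ permutahedron (x + y) := IH _ hdec u' rfl hu'perm
      have hB : (x + u') ∘ s ∈ permutahedron (x + y) := comp_mem _ s hA
      -- convex combination
      set a := x k; set b := x j; set c := u k; set d := u j
      have hab : b ≤ a := hx hkle
      have hD : (0:ℝ) < (a - b) + (d - c) := by
        have : (0:ℝ) < d - c := sub_pos.2 hukj
        have h2 : (0:ℝ) ≤ a - b := sub_nonneg.2 hab
        linarith
      set t : ℝ := (a - b) / ((a - b) + (d - c)) with ht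
      have ht0 : 0 ≤ t := div_nonneg (sub_nonneg.2 hab) hD.le
      have ht1 : t ≤ 1 := by
        rw [ht, div_le_one hD]
        have : (0:ℝ) < d - c := sub_pos.2 hukj
        linarith
      have heq : x + u = t • (x + u') + (1 - t) • ((x + u') ∘ s) := by
        funext m
        have hD' : (a - b) + (d - c) ≠ 0 := hD.ne'
        simp only [Pi.add_apply, Pi.smul_apply, Function.comp_apply, smul_eq_mul]
        by_cases hmk : m = k
        · have e1 : u' m = d := by
            simp only [hu', Function.comp_apply, hs, hmk, Equiv.swap_apply_left]
            rfl
          have e2 : s m = j := by rw [hmk, hs]; exact Equiv.swap_apply_left k j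
          have e3 : x (s m) = b := by rw [e2]
          have e4 : u' (s m) = c := by
            rw [e2]
            simp only [hu', Function.comp_apply, hs, Equiv.swap_apply_right]
            rfl
          rw [e1, e3, e4, hmk, ht]
          show a + c = (a - b) / ((a - b) + (d - c)) * (a + d)
            + (1 - (a - b) / ((a - b) + (d - c))) * (b + c)
          field_simp
          ring
        · by_cases hmj : m = j
          · have e1 : u' m = c := by
              simp only [hu', Function.comp_apply, hs, hmj, Equiv.swap_apply_right]
              rfl
            have e2 : s m = k := by rw [hmj, hs]; exact Equiv.swap_apply_right k j
            have e3 : x (s m) = a := by rw [e2]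
            have e4 : u' (s m) = d := by
              rw [e2]
              simp only [hu', Function.comp_apply, hs, Equiv.swap_apply_left]
              rfl
            rw [e1, e3, e4, hmj, ht]
            show b + d = (a - b) / ((a - b) + (d - c)) * (b + c)
              + (1 - (a - b) / ((a - b) + (d - c))) * (a + d)
            field_simp
            ring
          · have h1 : s m = m := by rw [hs]; exact Equiv.swap_apply_of_ne_of_ne hmk hmj
            have e1 : u' m = u m := by
              simp only [hu', Function.comp_apply, h1]
            have e3 : x (s m) = x m := by rw [h1]
            have e4 : u' (s m) = u m := by rw [h1, e1]
            rw [e1, e3, e4]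
            ring
      rw [heq]
      exact (convex_convexHull ℝ _) hA hB ht0 (by linarith) (by ring)

end PermutahedronAux

/-- For weakly decreasing `x, y ∈ ℝ^p`, the Minkowski sum of the permutahedra
`Π(x)` and `Π(y)` equals the permutahedron `Π(x + y)`. -/
theorem permutahedron_minkowski_sum (p : ℕ) (x y : Fin p → ℝ)
    (hx : Antitone x) (hy : Antitone y) :
    permutahedron x + permutahedron y = permutahedron (x + y) := by
  classical
  unfold permutahedron
  rw [← convexHull_add]
  apply Set.Subset.antisymm
  · apply convexHull_min _ (convex_convexHull ℝ _)
    rintro z hz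
    rw [Set.mem_add] at hz
    obtain ⟨w1, hw1, w2, hw2, rfl⟩ := hz
    obtain ⟨σ, rfl⟩ := hw1
    obtain ⟨τ, rfl⟩ := hw2
    have hkey : x + y ∘ (σ.symm.trans τ : Equiv.Perm (Fin p)) ∈ permutahedron (x + y) :=
      PermutahedronAux.key x y hx hy _ ⟨σ.symm.trans τ, rfl⟩
    have hcomp := PermutahedronAux.comp_mem (x + y) σ hkey
    have : (x + y ∘ (σ.symm.trans τ : Equiv.Perm (Fin p))) ∘ σ = x ∘ σ + y ∘ τ := by
      funext m; simp
    rw [this] at hcomp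
    exact hcomp
  · apply convexHull_mono
    rintro _ ⟨σ, rfl⟩
    exact ⟨x ∘ σ, ⟨σ, rfl⟩, y ∘ σ, ⟨σ, rfl⟩, rfl⟩
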